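/- Singleton-type bound for batch/PIR codes: let G be a k×n matrix over a finite field F_q with property A_t, where k ≥ 1. Then n ≥ k + t − 1. -/

import Mathlib

/-- Some `F`-linear combination of the columns of `G` indexed by `T` equals the vector `v`. -/
def ColLinComb {F : Type*} [Field F] {k n : ℕ} (G : Matrix (Fin k) (Fin n) F)
    (T : Finset (Fin n)) (v : Fin k → F) : Prop :=
  ∃ c : Fin n → F, ∑ j ∈ T, c j • G.transpose j = v

/-- `G` has property `A_t` (generates a `t`-server PIR code). -/
def PropertyA {F : Type*} [Field F] {k n : ℕ} (G : Matrix (Fin k) (Fin n) F) (t : ℕ) : Prop :=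
  ∀ i : Fin k, ∃ T : Fin t → Finset (Fin n),
    (∀ j₁ j₂ : Fin t, j₁ ≠ j₂ → Disjoint (T j₁) (T j₂)) ∧
    ∀ j : Fin t, ColLinComb G (T j) (Pi.single i 1)

/-- Any nonzero codeword has Hamming weight at least `t`. -/
lemma weight_ge_of_propertyA {F : Type*} [Field F] [DecidableEq F] {k n t : ℕ}
    (G : Matrix (Fin k) (Fin n) F) (hA : PropertyA G t) (x : Fin k → F) (hx : x ≠ 0) :
    t ≤ (Finset.univ.filter fun m => Matrix.vecMul x G m ≠ 0).card := by
  obtain ⟨i, hxi⟩ := Function.ne_iff.mp hx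
  simp only [Pi.zero_apply] at hxi
  obtain ⟨T, hdisj, hcomb⟩ := hA i
  have key : ∀ j : Fin t, ∃ m, m ∈ T j ∧ Matrix.vecMul x G m ≠ 0 := by
    intro j
    obtain ⟨c, hc⟩ := hcomb j
    have h := congrArg (fun v : Fin k → F => ∑ i', x i' * v i') hc
    simp only [Finset.sum_apply, Pi.smul_apply, smul_eq_mul] at h
    have hL : ∑ i', x i' * ∑ m ∈ T j, c m * G.transpose m i'
        = ∑ m ∈ T j, c m * Matrix.vecMul x G m := by
      simp only [Finset.mul_sum, Matrix.vecMul, dotProduct, Matrix.transpose_apply,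
        Finset.mul_sum]
      rw [Finset.sum_comm]
      apply Finset.sum_congr rfl
      intro m _
      apply Finset.sum_congr rfl
      intro i' _
      ring
    have hR : ∑ i', x i' * (Pi.single i (1 : F) : Fin k → F) i' = x i := by
      rw [Finset.sum_eq_single i]
      · simp
      · intro b _ hb; simp [Pi.single_apply, hb]
      · simp
    rw [hL, hR] at h
    by_contra hcon
    push_neg at hcon
    have : ∑ m ∈ T j, c m * Matrix.vecMul x G m = 0 := by
      apply Finset.sum_eq_zero
      intro m hm
      rcases Classical.em (Matrix.vecMul x G m = 0) with h0 | h0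
      · rw [h0, mul_zero]
      · exact absurd h0 (by simpa using (hcon m hm))
    exact hxi (by rw [← h, this])
  choose f hf1 hf2 using key
  have hinj : Function.Injective f := by
    intro j₁ j₂ hj
    by_contra hne
    exact (Finset.disjoint_left.mp (hdisj j₁ j₂ hne)) (hf1 j₁) (hj ▸ hf1 j₂)
  calc t = Fintype.card (Fin t) := (Fintype.card_fin t).symm
    _ ≤ (Finset.univ.filter fun m => Matrix.vecMul x G m ≠ 0).card := by
        apply Finset.card_le_card_of_injOn f
        · intro j _
          simp only [Finset.mem_coe, Finset.mem_filter, Finset.mem_univ, true_and]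
          exact hf2 j
        · exact hinj.injOn

/-- **Singleton-type bound for batch/PIR codes.**  If a `k×n` matrix `G` over a finite
field has property `A_t` with `k ≥ 1` (and `t ≥ 1`), then `n ≥ k + t − 1`. -/
theorem singleton_bound_PIR {F : Type*} [Field F] [Fintype F] {k n t : ℕ}
    (hk : 1 ≤ k) (ht : 1 ≤ t) (G : Matrix (Fin k) (Fin n) F) (hA : PropertyA G t) :
    k + t - 1 ≤ n := by
  classical
  set d := min (t - 1) n with hd
  obtain ⟨D, hDsub, hDcard⟩ := Finset.exists_subset_card_eq
    (s := (Finset.univ : Finset (Fin n))) (n := d)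
    (by rw [hd, Finset.card_univ, Fintype.card_fin]; exact min_le_right _ _)
  set φ : (Fin k → F) → ({m : Fin n // m ∉ D} → F) :=
    fun x m => Matrix.vecMul x G m.val with hφ
  have hinj : Function.Injective φ := by
    intro x y hxy
    by_contra hne
    have hz : x - y ≠ 0 := sub_ne_zero.mpr hne
    have hw := weight_ge_of_propertyA G hA (x - y) hz
    have hsub : (Finset.univ.filter fun m => Matrix.vecMul (x - y) G m ≠ 0) ⊆ D := by
      intro m hm
      simp only [Finset.mem_filter, Finset.mem_univ, true_and] at hm
      by_contra hmD
      apply hm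
      have := congrFun hxy ⟨m, hmD⟩
      simp only [hφ] at this
      rw [Matrix.sub_vecMul, Pi.sub_apply, this, sub_self]
    have := (Finset.card_le_card hsub).trans_eq hDcard
    have ht' : t ≤ d := hw.trans this
    have : d ≤ t - 1 := min_le_left _ _
    omega
  have hcard := Fintype.card_le_of_injective φ hinj
  have hq : 1 < Fintype.card F := Fintype.one_lt_card
  have hsub_card : Fintype.card {m : Fin n // m ∉ D} = n - d := by
    rw [Fintype.card_subtype_compl]
    simp [hDcard]
  rw [Fintype.card_fun, Fintype.card_fun] at hcard
  simp only [Fintype.card_fin, hsub_card] at hcard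
  have hk' : k ≤ n - d := (Nat.pow_le_pow_iff_right hq).mp hcard
  omega
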